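/- For integers q ≥ 1, 0 ≤ s ≤ q, and ℓ ≥ 1: C(q,s) / C(ℓq, ℓs) ≤ (s/q)^{(ℓ-1)s} (interpreting 0^0 = 1). -/

import Mathlib

lemma my_choose_mul_le (m n a b : ℕ) :
    m.choose a * n.choose b ≤ (m + n).choose (a + b) := by
  rw [Nat.add_choose_eq]
  exact Finset.single_le_sum (f := fun ij : ℕ × ℕ => m.choose ij.1 * n.choose ij.2)
    (fun _ _ => Nat.zero_le _) (a := (a, b)) (by simp)

lemma my_pow_le_choose_mul_pow : ∀ k n : ℕ, k ≤ n → n ^ k ≤ n.choose k * k ^ k := by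
  intro k
  induction k with
  | zero => intro n _; simp
  | succ k ih =>
    intro n hkn
    obtain ⟨m, rfl⟩ : ∃ m, n = m + 1 := ⟨n - 1, by omega⟩
    have hkm : k ≤ m := by omega
    rcases Nat.eq_zero_or_pos k with hk0 | hkpos
    · subst hk0; simp
    -- cancel k^k
    have hpos : 0 < k ^ k := Nat.pow_pos hkpos
    apply Nat.le_of_mul_le_mul_right _ hpos
    have key : (m + 1) ^ k * k ^ k ≤ Nat.choose m k * (k + 1) ^ k * k ^ k := by
      have h1 : (m + 1) ^ k * k ^ k = (k * (m + 1)) ^ k := by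
        rw [mul_pow]; ring
      have h2 : m ^ k * (k + 1) ^ k = ((k + 1) * m) ^ k := by
        rw [mul_pow]; ring
      have h3 : (k * (m + 1)) ^ k ≤ ((k + 1) * m) ^ k :=
        Nat.pow_le_pow_left (by nlinarith) k
      calc (m + 1) ^ k * k ^ k = (k * (m + 1)) ^ k := h1
        _ ≤ ((k + 1) * m) ^ k := h3
        _ = m ^ k * (k + 1) ^ k := h2.symm
        _ ≤ (Nat.choose m k * k ^ k) * (k + 1) ^ k :=
            Nat.mul_le_mul_right _ (ih m hkm)
        _ = Nat.choose m k * (k + 1) ^ k * k ^ k := by ring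
    have hrec : Nat.choose (m + 1) (k + 1) * (k + 1) = (m + 1) * Nat.choose m k := by
      rw [← Nat.add_one_mul_choose_eq]
    calc (m + 1) ^ (k + 1) * k ^ k = (m + 1) * ((m + 1) ^ k * k ^ k) := by ring
      _ ≤ (m + 1) * (Nat.choose m k * (k + 1) ^ k * k ^ k) := Nat.mul_le_mul_left _ key
      _ = (Nat.choose (m + 1) (k + 1) * (k + 1)) * (k + 1) ^ k * k ^ k := by
          rw [hrec]; ring
      _ = Nat.choose (m + 1) (k + 1) * (k + 1) ^ (k + 1) * k ^ k := by ring

lemma my_key (q s ℓ : ℕ) (hq : 1 ≤ q) (hs : s ≤ q) (hℓ : 1 ≤ ℓ) :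
    q ^ ((ℓ - 1) * s) * q.choose s ≤ s ^ ((ℓ - 1) * s) * ((ℓ * q).choose (ℓ * s)) := by
  obtain ⟨m, rfl⟩ : ∃ m, ℓ = m + 1 := ⟨ℓ - 1, by omega⟩
  simp only [Nat.add_sub_cancel]
  rcases Nat.eq_zero_or_pos m with rfl | hm
  · simp
  have h1 : q ^ (m * s) ≤ s ^ (m * s) * (m * q).choose (m * s) := by
    have := my_pow_le_choose_mul_pow (m * s) (m * q) (Nat.mul_le_mul_left m hs)
    have hmpos : 0 < m ^ (m * s) := Nat.pow_pos hm
    apply Nat.le_of_mul_le_mul_left _ hmpos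
    calc m ^ (m * s) * q ^ (m * s) = (m * q) ^ (m * s) := by rw [mul_pow]
      _ ≤ (m * q).choose (m * s) * (m * s) ^ (m * s) := this
      _ = m ^ (m * s) * (s ^ (m * s) * (m * q).choose (m * s)) := by
          rw [mul_pow]; ring
  calc q ^ (m * s) * q.choose s ≤ (s ^ (m * s) * (m * q).choose (m * s)) * q.choose s :=
        Nat.mul_le_mul_right _ h1
    _ = s ^ (m * s) * (q.choose s * (m * q).choose (m * s)) := by ring
    _ ≤ s ^ (m * s) * ((q + m * q).choose (s + m * s)) :=
        Nat.mul_le_mul_left _ (my_choose_mul_le q (m * q) s (m * s))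
    _ = s ^ (m * s) * (((m + 1) * q).choose ((m + 1) * s)) := by ring_nf

/-- For integers `q ≥ 1`, `0 ≤ s ≤ q` and `ℓ ≥ 1`:
`C(q,s) / C(ℓq, ℓs) ≤ (s/q)^{(ℓ-1)s}` (with the convention `0^0 = 1`). -/
theorem choose_ratio_le (q s ℓ : ℕ) (hq : 1 ≤ q) (hs : s ≤ q) (hℓ : 1 ≤ ℓ) :
    ((q.choose s : ℝ)) / ((ℓ * q).choose (ℓ * s) : ℝ)
      ≤ ((s : ℝ) / (q : ℝ)) ^ ((ℓ - 1) * s) := by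
  have hB : (0 : ℝ) < ((ℓ * q).choose (ℓ * s) : ℝ) := by
    exact_mod_cast Nat.choose_pos (Nat.mul_le_mul_left ℓ hs)
  have hqpos : (0 : ℝ) < (q : ℝ) ^ ((ℓ - 1) * s) := by positivity
  rw [div_pow, div_le_div_iff₀ hB hqpos]
  have := my_key q s ℓ hq hs hℓ
  calc ((q.choose s : ℝ)) * (q : ℝ) ^ ((ℓ - 1) * s)
      = ((q ^ ((ℓ - 1) * s) * q.choose s : ℕ) : ℝ) := by push_cast; ring
    _ ≤ ((s ^ ((ℓ - 1) * s) * ((ℓ * q).choose (ℓ * s)) : ℕ) : ℝ) := by exact_mod_cast this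
    _ = (s : ℝ) ^ ((ℓ - 1) * s) * ((ℓ * q).choose (ℓ * s) : ℝ) := by push_cast; ring
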